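/- Let G be a minimal planar subcubic graph of girth at least 8 that is not 2-distance 6-colorable. Then G contains no k-path with k ≥ 2, i.e., no path whose internal vertices are at least two consecutive vertices of degree 2. -/

import Mathlib

/-- `H` is a minor of `G`: there is a minor model, i.e. disjoint nonempty
connected branch sets in `G` indexed by the vertices of `H`, with an edge of
`G` between the branch sets of any two adjacent vertices of `H`. -/
def IsMinor {α β : Type} (H : SimpleGraph α) (G : SimpleGraph β) : Prop :=
  ∃ B : α → Set β, (∀ a, (B a).Nonempty) ∧ Pairwise (Function.onFun Disjoint B) ∧
    (∀ a, (G.induce (B a)).Connected) ∧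
    ∀ ⦃a₁ a₂⦄, H.Adj a₁ a₂ → ∃ u ∈ B a₁, ∃ v ∈ B a₂, G.Adj u v

/-- Planarity via Wagner's theorem: no `K₅` minor and no `K₃,₃` minor. -/
def IsPlanar {β : Type} (G : SimpleGraph β) : Prop :=
  ¬ IsMinor (SimpleGraph.completeGraph (Fin 5)) G ∧
  ¬ IsMinor (completeBipartiteGraph (Fin 3) (Fin 3)) G

/-- `G` is 2-distance colorable with `k` colors: vertices at distance at most 2
(adjacent or sharing a common neighbor) receive distinct colors. -/
def TwoDistColorable {V : Type} (G : SimpleGraph V) (k : ℕ) : Prop :=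
  ∃ c : V → Fin k, ∀ u v : V, u ≠ v →
    (G.Adj u v ∨ ∃ w, G.Adj u w ∧ G.Adj w v) → c u ≠ c v

namespace Stmt10Aux

open SimpleGraph

variable {V W : Type}

/-- The canonical homomorphism out of a comap graph. -/
def comapHom (G : SimpleGraph V) (f : W → V) : G.comap f →g G := ⟨f, fun h => h⟩

lemma acyclic_comap {G : SimpleGraph V} {f : W → V} (hf : Function.Injective f)
    (h : G.IsAcyclic) : (G.comap f).IsAcyclic := by
  intro v c hc
  exact h (c.map (comapHom G f)) (hc.map hf)

lemma deg_comap [Fintype V] {G : SimpleGraph V} {f : W → V} (hf : Function.Injective f)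
    (i : W) : ((G.comap f).neighborSet i).ncard ≤ (G.neighborSet (f i)).ncard := by
  have h1 : f '' ((G.comap f).neighborSet i) ⊆ G.neighborSet (f i) := by
    rintro _ ⟨j, hj, rfl⟩; exact hj
  calc ((G.comap f).neighborSet i).ncard = (f '' ((G.comap f).neighborSet i)).ncard :=
        (Set.ncard_image_of_injective _ hf).symm
    _ ≤ (G.neighborSet (f i)).ncard := Set.ncard_le_ncard h1 (Set.toFinite _)

lemma girth_comap {G : SimpleGraph V} {f : W → V} (hf : Function.Injective f)
    (hg : (8 : ℕ∞) ≤ G.girth)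
    (hna : ¬ (G.comap f).IsAcyclic) : (8 : ℕ∞) ≤ (G.comap f).girth := by
  have hgn : 8 ≤ G.girth := by exact_mod_cast hg
  have hcyc : ∀ (a : V) (w : G.Walk a a), w.IsCycle → 8 ≤ w.length := by
    intro a w hw
    have h1 : G.egirth ≤ w.length := le_egirth.mp le_rfl a w hw
    have h2 : G.girth ≤ w.length := by
      have := ENat.toNat_le_toNat h1 (by simp)
      simpa [SimpleGraph.girth] using this
    omega
  obtain ⟨a, w, hw, hlen⟩ := exists_egirth_eq_length.mpr hna
  have h8 : 8 ≤ w.length := by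
    have := hcyc (f a) (w.map (comapHom G f)) (hw.map hf)
    exact le_of_le_of_eq this (SimpleGraph.Walk.length_map ..)
  have : (G.comap f).girth = w.length := by
    simp [SimpleGraph.girth, hlen]
  rw [this]
  exact_mod_cast h8

lemma minor_comap {α : Type} {K : SimpleGraph α} {G : SimpleGraph V} {f : W → V}
    (hf : Function.Injective f) (h : IsMinor K (G.comap f)) : IsMinor K G := by
  obtain ⟨B, hne, hdisj, hconn, hadj⟩ := h
  refine ⟨fun a => f '' B a, fun a => (hne a).image f, ?_, ?_, ?_⟩
  · intro a b hab
    exact (Set.disjoint_image_iff hf).mpr (hdisj hab)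
  · intro a
    have iso : (G.comap f).induce (B a) ≃g G.induce (f '' B a) := by
      refine ⟨Equiv.Set.image f (B a) hf, ?_⟩
      rintro ⟨x, hx⟩ ⟨y, hy⟩
      simp [Equiv.Set.image, Equiv.Set.imageOfInjOn]
    exact (hconn a).map iso.toHom iso.toEquiv.surjective
  · intro a b hab
    obtain ⟨x, hx, y, hy, hxy⟩ := hadj hab
    exact ⟨f x, ⟨x, hx, rfl⟩, f y, ⟨y, hy, rfl⟩, hxy⟩

lemma planar_comap {G : SimpleGraph V} {f : W → V} (hf : Function.Injective f)
    (h : IsPlanar G) : IsPlanar (G.comap f) :=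
  ⟨fun hm => h.1 (minor_comap hf hm), fun hm => h.2 (minor_comap hf hm)⟩

lemma exists_color {s : Set (Fin 6)} (h : s.ncard ≤ 5) : ∃ k : Fin 6, k ∉ s := by
  by_contra hc
  push_neg at hc
  have : (Set.univ : Set (Fin 6)).ncard ≤ s.ncard :=
    Set.ncard_le_ncard (fun x _ => hc x) (Set.toFinite _)
  simp [Set.ncard_univ] at this
  omega

lemma edge_head {G : SimpleGraph V} {z x w : V} (q : G.Walk z x) (hq : q.IsPath)
    (hzw : s(z, w) ∈ q.edges) : w = q.getVert 1 := by
  cases q with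
  | nil => simp at hzw
  | @cons _ b _ h rest =>
    rw [SimpleGraph.Walk.edges_cons] at hzw
    rcases List.mem_cons.mp hzw with h1 | h2
    · rcases Sym2.eq_iff.mp h1 with ⟨-, rfl⟩ | ⟨hz, hw⟩
      · exact ((SimpleGraph.Walk.getVert_cons_succ (n := 0) rest h).trans rest.getVert_zero).symm
      · subst hz; exact absurd rfl h.ne
    · have hzsup : z ∈ rest.support := SimpleGraph.Walk.fst_mem_support_of_mem_edges rest h2
      exact absurd hzsup ((SimpleGraph.Walk.cons_isPath_iff h rest).mp hq).2

lemma not_acyclic_of_min_degree [Fintype V] [Nonempty V] (G : SimpleGraph V)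
    (hdeg : ∀ v, 2 ≤ (G.neighborSet v).ncard) : ¬ G.IsAcyclic := by
  classical
  intro hac
  set P : ℕ → Prop := fun n => ∃ (x z : V) (p : G.Walk x z), p.IsPath ∧ p.length = n with hP
  obtain ⟨v0⟩ := ‹Nonempty V›
  have hP0 : P 0 := ⟨v0, v0, .nil, by simp, rfl⟩
  set N := Nat.findGreatest P (Fintype.card V) with hN
  obtain ⟨x, z, p, hp, hlen⟩ : P N := Nat.findGreatest_spec (Nat.zero_le _) hP0
  set q := p.reverse with hqdef
  have hq : q.IsPath := hp.reverse
  have hqlen : q.length = N := by rw [hqdef, SimpleGraph.Walk.length_reverse, hlen]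
  set s := q.getVert 1 with hs
  obtain ⟨w, hwadj, hws⟩ : ∃ w ∈ G.neighborSet z, w ≠ s := by
    by_contra hcon
    push_neg at hcon
    have hsub : G.neighborSet z ⊆ {s} := fun y hy => hcon y hy
    have := Set.ncard_le_ncard hsub (Set.toFinite _)
    rw [Set.ncard_singleton] at this
    have := hdeg z
    omega
  by_cases hmem : w ∈ q.support
  · set t := q.takeUntil w hmem with ht
    have htp : t.IsPath := hq.takeUntil hmem
    have hedge : s(w, z) ∉ t.edges := by
      intro hcontra
      have : s(z, w) ∈ q.edges := by
        have := SimpleGraph.Walk.edges_takeUntil_subset q hmem hcontra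
        rwa [Sym2.eq_swap] at this
      exact hws (edge_head q hq this)
    have hcyc : (SimpleGraph.Walk.cons (G.adj_symm hwadj) t).IsCycle :=
      (SimpleGraph.Walk.cons_isCycle_iff t (G.adj_symm hwadj)).mpr ⟨htp, hedge⟩
    exact hac _ hcyc
  · have hpath : (SimpleGraph.Walk.cons (G.adj_symm hwadj) q).IsPath :=
      (SimpleGraph.Walk.cons_isPath_iff _ _).mpr ⟨hq, hmem⟩
    have hle : N + 1 ≤ N := by
      have h1 : (SimpleGraph.Walk.cons (G.adj_symm hwadj) q).length = N + 1 := by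
        simp [SimpleGraph.Walk.length_cons, hqlen]
      have h2 : N + 1 ≤ Fintype.card V := by
        have := hpath.length_lt; omega
      exact Nat.le_findGreatest h2 ⟨w, x, _, hpath, h1⟩
    omega

/-- A finite acyclic subcubic graph is 2-distance 6-colorable. -/
lemma forest_colorable : ∀ (n : ℕ) {V : Type} [Fintype V] (H : SimpleGraph V),
    Fintype.card V ≤ n → H.IsAcyclic → (∀ v, (H.neighborSet v).ncard ≤ 3) →
    TwoDistColorable H 6 := by
  intro n
  induction n with
  | zero =>
    intro V _ H hcard _ _
    have hem : IsEmpty V := Fintype.card_eq_zero_iff.mp (Nat.le_zero.mp hcard)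
    exact ⟨fun v => isEmptyElim v, fun u => isEmptyElim u⟩
  | succ n ih =>
    intro V _ H hcard hac hdeg
    classical
    rcases isEmpty_or_nonempty V with hem | hne
    · exact ⟨fun v => isEmptyElim v, fun u => isEmptyElim u⟩
    obtain ⟨ℓ, hℓ⟩ : ∃ ℓ, (H.neighborSet ℓ).ncard ≤ 1 := by
      by_contra hcon
      push_neg at hcon
      exact not_acyclic_of_min_degree H (fun v => hcon v) hac
    have huniq : ∀ y z, y ∈ H.neighborSet ℓ → z ∈ H.neighborSet ℓ → y = z := by
      intro y z hy hz
      by_contra hne'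
      have hsub : ({y, z} : Set V) ⊆ H.neighborSet ℓ := by
        intro t ht; rcases ht with rfl | ht; · exact hy
        · simp only [Set.mem_singleton_iff] at ht; subst ht; exact hz
      have := Set.ncard_le_ncard hsub (Set.toFinite _)
      rw [Set.ncard_pair hne'] at this
      omega
    -- remove ℓ
    let V' := {y : V // y ≠ ℓ}
    let H' := H.comap (Subtype.val : V' → V)
    have hval : Function.Injective (Subtype.val : V' → V) := Subtype.val_injective
    have hcard' : Fintype.card V' ≤ n := by
      have h1 := Fintype.card_subtype_lt (p := fun y : V => y ≠ ℓ) (x := ℓ) (by simp)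
      have h2 : Fintype.card V' = Fintype.card {x // x ≠ ℓ} :=
        Fintype.card_congr (Equiv.refl _)
      omega
    obtain ⟨c', hc'⟩ := ih H' hcard' (acyclic_comap hval hac)
      (fun i => (deg_comap hval i).trans (hdeg _))
    let c0 : V → Fin 6 := fun y => if h : y = ℓ then 0 else c' ⟨y, h⟩
    -- forbidden colors for ℓ
    let S : Set V := {y | ∃ w ∈ H.neighborSet ℓ, y = w ∨ H.Adj w y}
    have hScard : S.ncard ≤ 4 := by
      rcases (H.neighborSet ℓ).eq_empty_or_nonempty with hemp | ⟨w0, hw0⟩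
      · have hsub0 : S ⊆ (∅ : Set V) := by
          rintro y ⟨w, hw, -⟩
          rw [hemp] at hw
          exact hw
        have := Set.ncard_le_ncard hsub0 (Set.toFinite _)
        simp only [Set.ncard_empty] at this
        omega
      · have hSsub : S ⊆ insert w0 (H.neighborSet w0) := by
          rintro y ⟨w, hw, hy⟩
          rw [huniq w w0 hw hw0] at hy
          rcases hy with rfl | hy
          · exact Set.mem_insert _ _
          · exact Set.mem_insert_of_mem _ hy
        calc S.ncard ≤ (insert w0 (H.neighborSet w0)).ncard :=
              Set.ncard_le_ncard hSsub (Set.toFinite _)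
          _ ≤ (H.neighborSet w0).ncard + 1 := Set.ncard_insert_le _ _
          _ ≤ 4 := by have := hdeg w0; omega
    obtain ⟨cℓ, hcℓ⟩ := exists_color (s := c0 '' S)
      ((Set.ncard_image_le (Set.toFinite _)).trans (by omega))
    refine ⟨fun y => if y = ℓ then cℓ else c0 y, ?_⟩
    have hcol1 : ∀ y : V, y ≠ ℓ → (if y = ℓ then cℓ else c0 y) = c0 y := by
      intro y hy; rw [if_neg hy]
    have hsymm : ∀ y z : V, (H.Adj y z ∨ ∃ w, H.Adj y w ∧ H.Adj w z) →
        (H.Adj z y ∨ ∃ w, H.Adj z w ∧ H.Adj w y) := by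
      rintro y z (h | ⟨w, h1, h2⟩)
      · exact Or.inl h.symm
      · exact Or.inr ⟨w, h2.symm, h1.symm⟩
    have hkey : ∀ z, z ≠ ℓ → (H.Adj ℓ z ∨ ∃ w, H.Adj ℓ w ∧ H.Adj w z) → cℓ ≠ c0 z := by
      intro z hz hconf
      have hzS : z ∈ S := by
        rcases hconf with h | ⟨w, h1, h2⟩
        · exact ⟨z, h, Or.inl rfl⟩
        · exact ⟨w, h1, Or.inr h2⟩
      exact fun h => hcℓ (h ▸ Set.mem_image_of_mem c0 hzS)
    intro y z hyz hconf
    show (if y = ℓ then cℓ else c0 y) ≠ (if z = ℓ then cℓ else c0 z)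
    by_cases hy : y = ℓ
    · have hz : z ≠ ℓ := fun h => hyz (hy.trans h.symm)
      rw [hy] at hconf
      rw [hy, if_pos rfl, hcol1 z hz]
      exact hkey z hz hconf
    · by_cases hz : z = ℓ
      · rw [hz] at hconf
        rw [hz, if_pos rfl, hcol1 y hy]
        exact fun h => hkey y hy (hsymm y ℓ hconf) h.symm
      · rw [hcol1 y hy, hcol1 z hz]
        have hne2 : (⟨y, hy⟩ : V') ≠ ⟨z, hz⟩ := fun h => hyz (congrArg Subtype.val h)
        have hconf' : H'.Adj ⟨y, hy⟩ ⟨z, hz⟩ ∨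
            ∃ w, H'.Adj ⟨y, hy⟩ w ∧ H'.Adj w ⟨z, hz⟩ := by
          rcases hconf with h | ⟨w, h1, h2⟩
          · exact Or.inl h
          · by_cases hwℓ : w = ℓ
            · rw [hwℓ] at h1 h2
              exact absurd (huniq y z h1.symm h2) hyz
            · exact Or.inr ⟨⟨w, hwℓ⟩, h1, h2⟩
        have := hc' ⟨y, hy⟩ ⟨z, hz⟩ hne2 hconf'
        simpa [c0, hy, hz] using this

end Stmt10Aux

open Stmt10Aux in
/-- A vertex-minimal planar subcubic graph of girth at least 8 that is not
2-distance 6-colorable contains no two adjacent vertices of degree 2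
(equivalently, no `k`-path with `k ≥ 2`). -/
theorem stmt10 {V : Type} [Fintype V] (G : SimpleGraph V)
    (hplanar : IsPlanar G) (hsub : ∀ v, (G.neighborSet v).ncard ≤ 3)
    (hgirth : (8 : ℕ∞) ≤ G.girth) (hnc : ¬ TwoDistColorable G 6)
    (hmin : ∀ (n : ℕ) (H : SimpleGraph (Fin n)), IsPlanar H →
      (∀ v, (H.neighborSet v).ncard ≤ 3) → (8 : ℕ∞) ≤ H.girth →
      ¬ TwoDistColorable H 6 → Fintype.card V ≤ n) :
    ∀ u v, G.Adj u v →
      ¬((G.neighborSet u).ncard = 2 ∧ (G.neighborSet v).ncard = 2) := by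
  classical
  rintro u v huv ⟨hu2, hv2⟩
  have huvne : u ≠ v := G.ne_of_adj huv
  -- the other neighbor of u
  obtain ⟨a, hNu, hav⟩ : ∃ a, G.neighborSet u = {v, a} ∧ a ≠ v := by
    obtain ⟨x, y, hxy, hN⟩ := Set.ncard_eq_two.mp hu2
    have hv : v ∈ G.neighborSet u := huv
    rw [hN] at hv
    rcases hv with rfl | hv
    · exact ⟨y, by rw [hN], fun h => hxy h.symm⟩
    · simp only [Set.mem_singleton_iff] at hv; subst hv
      exact ⟨x, by rw [hN, Set.pair_comm], hxy⟩
  obtain ⟨b, hNv, hbu⟩ : ∃ b, G.neighborSet v = {u, b} ∧ b ≠ u := by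
    obtain ⟨x, y, hxy, hN⟩ := Set.ncard_eq_two.mp hv2
    have hu' : u ∈ G.neighborSet v := huv.symm
    rw [hN] at hu'
    rcases hu' with rfl | hu'
    · exact ⟨y, by rw [hN], fun h => hxy h.symm⟩
    · simp only [Set.mem_singleton_iff] at hu'; subst hu'
      exact ⟨x, by rw [hN, Set.pair_comm], hxy⟩
  have hua : G.Adj u a := by
    have : a ∈ G.neighborSet u := by rw [hNu]; exact Set.mem_insert_of_mem _ rfl
    exact this
  have hvb : G.Adj v b := by
    have : b ∈ G.neighborSet v := by rw [hNv]; exact Set.mem_insert_of_mem _ rfl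
    exact this
  have hau : a ≠ u := fun h => G.irrefl (h ▸ hua)
  have hbv : b ≠ v := fun h => G.irrefl (h ▸ hvb)
  have hNu' : ∀ z, G.Adj u z → z = v ∨ z = a := by
    intro z hz
    have : z ∈ G.neighborSet u := hz
    rw [hNu] at this
    simpa using this
  have hNv' : ∀ z, G.Adj v z → z = u ∨ z = b := by
    intro z hz
    have : z ∈ G.neighborSet v := hz
    rw [hNv] at this
    simpa using this
  -- the graph with u and v removed
  let V' := {y : V // y ≠ u ∧ y ≠ v}
  let G' := G.comap (Subtype.val : V' → V)
  have hval : Function.Injective (Subtype.val : V' → V) := Subtype.val_injective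
  have hcardlt : Fintype.card V' < Fintype.card V :=
    Fintype.card_subtype_lt (p := fun y : V => y ≠ u ∧ y ≠ v) (x := u) (by simp)
  have hcol' : TwoDistColorable G' 6 := by
    by_cases hac : G'.IsAcyclic
    · exact forest_colorable (Fintype.card V') G' le_rfl hac
        (fun i => (deg_comap hval i).trans (hsub _))
    · set n := Fintype.card V' with hn
      let e : V' ≃ Fin n := Fintype.equivFin V'
      let f : Fin n → V := fun i => (e.symm i : V)
      have hfinj : Function.Injective f := hval.comp e.symm.injective
      let H := G.comap f
      have hHeq : ∀ (y z : V'), H.Adj (e y) (e z) ↔ G'.Adj y z := by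
        intro y z
        show G.Adj (e.symm (e y) : V) (e.symm (e z) : V) ↔ G.Adj (y : V) (z : V)
        rw [e.symm_apply_apply, e.symm_apply_apply]
      have hHna : ¬ H.IsAcyclic := by
        intro hH
        apply hac
        intro y c hc
        let hψ : G' →g H := ⟨fun y => e y, fun {y z} h => (hHeq y z).mpr h⟩
        have hinj : Function.Injective ⇑hψ := fun x y h => e.injective h
        exact hH (c.map hψ) (hc.map hinj)
      have hH6 : TwoDistColorable H 6 := by
        by_contra hnch
        have := hmin n H (planar_comap hfinj hplanar)
          (fun i => (deg_comap hfinj i).trans (hsub _))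
          (girth_comap hfinj hgirth hHna) hnch
        omega
      obtain ⟨c, hc⟩ := hH6
      refine ⟨fun y => c (e y), ?_⟩
      intro y z hyz hconf
      refine hc (e y) (e z) (fun h => hyz (e.injective h)) ?_
      rcases hconf with h | ⟨w, h1, h2⟩
      · exact Or.inl ((hHeq y z).mpr h)
      · exact Or.inr ⟨e w, (hHeq y w).mpr h1, (hHeq w z).mpr h2⟩
  obtain ⟨c', hc'⟩ := hcol'
  -- build a coloring of G
  let c0 : V → Fin 6 := fun y => if h : y ≠ u ∧ y ≠ v then c' ⟨y, h⟩ else 0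
  have hNb : (G.neighborSet b \ {v}).ncard ≤ 2 := by
    have hvmem : v ∈ G.neighborSet b := hvb.symm
    rw [Set.ncard_diff_singleton_of_mem hvmem]
    have := hsub b
    omega
  have hNa : (G.neighborSet a \ {u}).ncard ≤ 2 := by
    have humem : u ∈ G.neighborSet a := hua.symm
    rw [Set.ncard_diff_singleton_of_mem humem]
    have := hsub a
    omega
  have hpairc : ({a, b} : Set V).ncard ≤ 2 := by
    calc ({a, b} : Set V).ncard ≤ ({b} : Set V).ncard + 1 := Set.ncard_insert_le _ _
      _ ≤ 2 := by simp
  obtain ⟨cv, hcv⟩ := exists_color (s := c0 '' (({a, b} : Set V) ∪ (G.neighborSet b \ {v})))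
    (by
      calc (c0 '' (({a, b} : Set V) ∪ (G.neighborSet b \ {v}))).ncard
          ≤ (({a, b} : Set V) ∪ (G.neighborSet b \ {v})).ncard :=
            Set.ncard_image_le (Set.toFinite _)
        _ ≤ ({a, b} : Set V).ncard + (G.neighborSet b \ {v}).ncard := Set.ncard_union_le _ _
        _ ≤ 5 := by omega)
  obtain ⟨cu, hcu⟩ := exists_color
    (s := insert cv (c0 '' (({a, b} : Set V) ∪ (G.neighborSet a \ {u}))))
    (by
      calc (insert cv (c0 '' (({a, b} : Set V) ∪ (G.neighborSet a \ {u})))).ncard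
          ≤ (c0 '' (({a, b} : Set V) ∪ (G.neighborSet a \ {u}))).ncard + 1 :=
            Set.ncard_insert_le _ _
        _ ≤ (({a, b} : Set V) ∪ (G.neighborSet a \ {u})).ncard + 1 := by
            have := Set.ncard_image_le (s := ({a, b} : Set V) ∪ (G.neighborSet a \ {u}))
              (f := c0) (Set.toFinite _)
            omega
        _ ≤ (({a, b} : Set V).ncard + (G.neighborSet a \ {u}).ncard) + 1 := by
            have := Set.ncard_union_le (({a, b} : Set V)) (G.neighborSet a \ {u})
            omega
        _ ≤ 5 := by omega)
  apply hnc
  refine ⟨fun y => if y = u then cu else if y = v then cv else c0 y, ?_⟩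
  have hcolu : (if u = u then cu else if u = v then cv else c0 u) = cu := by rw [if_pos rfl]
  have hcolv : (if v = u then cu else if v = v then cv else c0 v) = cv := by
    rw [if_neg (Ne.symm huvne), if_pos rfl]
  have hcolw : ∀ y : V, y ≠ u → y ≠ v →
      (if y = u then cu else if y = v then cv else c0 y) = c0 y := by
    intro y h1 h2; rw [if_neg h1, if_neg h2]
  have hconf_u : ∀ z, z ≠ u → z ≠ v → (G.Adj u z ∨ ∃ w, G.Adj u w ∧ G.Adj w z) →
      z ∈ ({a, b} : Set V) ∪ (G.neighborSet a \ {u}) := by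
    rintro z hzu hzv (h | ⟨w, h1, h2⟩)
    · rcases hNu' z h with h' | h'
      · exact absurd h' hzv
      · rw [h']; exact Or.inl (Set.mem_insert _ _)
    · rcases hNu' w h1 with h' | h'
      · rw [h'] at h2
        rcases hNv' z h2 with h'' | h''
        · exact absurd h'' hzu
        · rw [h'']; exact Or.inl (Set.mem_insert_of_mem _ rfl)
      · rw [h'] at h2
        exact Or.inr ⟨h2, hzu⟩
  have hconf_v : ∀ z, z ≠ u → z ≠ v → (G.Adj v z ∨ ∃ w, G.Adj v w ∧ G.Adj w z) →
      z ∈ ({a, b} : Set V) ∪ (G.neighborSet b \ {v}) := by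
    rintro z hzu hzv (h | ⟨w, h1, h2⟩)
    · rcases hNv' z h with h' | h'
      · exact absurd h' hzu
      · rw [h']; exact Or.inl (Set.mem_insert_of_mem _ rfl)
    · rcases hNv' w h1 with h' | h'
      · rw [h'] at h2
        rcases hNu' z h2 with h'' | h''
        · exact absurd h'' hzv
        · rw [h'']; exact Or.inl (Set.mem_insert _ _)
      · rw [h'] at h2
        exact Or.inr ⟨h2, hzv⟩
  have hsymm : ∀ y z : V, (G.Adj y z ∨ ∃ w, G.Adj y w ∧ G.Adj w z) →
      (G.Adj z y ∨ ∃ w, G.Adj z w ∧ G.Adj w y) := by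
    rintro y z (h | ⟨w, h1, h2⟩)
    · exact Or.inl h.symm
    · exact Or.inr ⟨w, h2.symm, h1.symm⟩
  have hcu_z : ∀ z, z ≠ u → z ≠ v → (G.Adj u z ∨ ∃ w, G.Adj u w ∧ G.Adj w z) →
      cu ≠ c0 z := by
    intro z hzu hzv hcf h
    exact hcu (Set.mem_insert_of_mem _ (h ▸ Set.mem_image_of_mem c0 (hconf_u z hzu hzv hcf)))
  have hcv_z : ∀ z, z ≠ u → z ≠ v → (G.Adj v z ∨ ∃ w, G.Adj v w ∧ G.Adj w z) →
      cv ≠ c0 z := by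
    intro z hzu hzv hcf h
    exact hcv (h ▸ Set.mem_image_of_mem c0 (hconf_v z hzu hzv hcf))
  have hcucv : cu ≠ cv := fun h => hcu (h ▸ Set.mem_insert _ _)
  intro y z hyz hconf
  show (if y = u then cu else if y = v then cv else c0 y) ≠
    (if z = u then cu else if z = v then cv else c0 z)
  by_cases hyu : y = u
  · rw [hyu] at hconf
    rw [hyu, hcolu]
    have hzu : z ≠ u := fun h => hyz (hyu.trans h.symm)
    by_cases hzv : z = v
    · rw [hzv, hcolv]; exact hcucv
    · rw [hcolw z hzu hzv]; exact hcu_z z hzu hzv hconf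
  · by_cases hyv : y = v
    · rw [hyv] at hconf
      rw [hyv, hcolv]
      have hzv : z ≠ v := fun h => hyz (hyv.trans h.symm)
      by_cases hzu : z = u
      · rw [hzu, hcolu]; exact hcucv.symm
      · rw [hcolw z hzu hzv]; exact hcv_z z hzu hzv hconf
    · by_cases hzu : z = u
      · rw [hzu, hcolu, hcolw y hyu hyv]
        rw [hzu] at hconf
        exact fun h => hcu_z y hyu hyv (hsymm y u hconf) h.symm
      · by_cases hzv : z = v
        · rw [hzv, hcolv, hcolw y hyu hyv]
          rw [hzv] at hconf
          exact fun h => hcv_z y hyu hyv (hsymm y v hconf) h.symm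
        · rw [hcolw y hyu hyv, hcolw z hzu hzv]
          have hne2 : (⟨y, hyu, hyv⟩ : V') ≠ ⟨z, hzu, hzv⟩ :=
            fun h => hyz (congrArg Subtype.val h)
          have hconf' : G'.Adj ⟨y, hyu, hyv⟩ ⟨z, hzu, hzv⟩ ∨
              ∃ w, G'.Adj ⟨y, hyu, hyv⟩ w ∧ G'.Adj w ⟨z, hzu, hzv⟩ := by
            rcases hconf with h | ⟨w, h1, h2⟩
            · exact Or.inl h
            · by_cases hwu : w = u
              · rw [hwu] at h1 h2
                rcases hNu' y h1.symm with h' | h'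
                · exact absurd h' hyv
                · rcases hNu' z h2 with h'' | h''
                  · exact absurd h'' hzv
                  · exact absurd (h'.trans h''.symm) hyz
              · by_cases hwv : w = v
                · rw [hwv] at h1 h2
                  rcases hNv' y h1.symm with h' | h'
                  · exact absurd h' hyu
                  · rcases hNv' z h2 with h'' | h''
                    · exact absurd h'' hzu
                    · exact absurd (h'.trans h''.symm) hyz
                · exact Or.inr ⟨⟨w, hwu, hwv⟩, h1, h2⟩
          have := hc' ⟨y, hyu, hyv⟩ ⟨z, hzu, hzv⟩ hne2 hconf'
          simpa [c0, hyu, hyv, hzu, hzv] using this
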